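/- In any diagnosis setting, if Δ ⊆ 𝔠 is a minimal diagnosis and C ∈ Δ, then Γ := Δ \ {C} is a minimal contingency set for C; in particular, C is an actual cause. -/
import Mathlib


/-- A propositional formula, identified with the set of valuations satisfying it. -/
abbrev PropFormula (V : Type*) := (V → Bool) → Prop

/-- A set of formulas is consistent if some valuation satisfies all of them. -/
def Consistent {V : Type*} (T : Set (PropFormula V)) : Prop :=
  ∃ v : V → Bool, ∀ φ ∈ T, φ v

/-- A consistency-based diagnosis setting: a finite set of components, injective
abnormality variables, a model `M`, and an observation `Obs`. -/
structure DiagSetting (V α : Type*) where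
  comps : Finset α
  ab : α → V
  ab_inj : Function.Injective ab
  M : Set (PropFormula V)
  Obs : Set (PropFormula V)

variable {V α : Type*} [DecidableEq α]

/-- `Th(Δ) = M ∪ Obs ∪ { ab C is true : C ∈ Δ } ∪ { ab C is false : C ∈ 𝔠 \ Δ }`. -/
def DiagSetting.Th (S : DiagSetting V α) (Δ : Finset α) : Set (PropFormula V) :=
  S.M ∪ S.Obs ∪ {φ | ∃ C ∈ Δ, φ = fun v => v (S.ab C) = true}
    ∪ {φ | ∃ C ∈ S.comps \ Δ, φ = fun v => v (S.ab C) = false}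

/-- `Δ` is a diagnosis if `Δ ⊆ 𝔠` and `Th(Δ)` is consistent. -/
def DiagSetting.Diagnosis (S : DiagSetting V α) (Δ : Finset α) : Prop :=
  Δ ⊆ S.comps ∧ Consistent (S.Th Δ)

/-- A diagnosis is minimal if no proper subset of it is a diagnosis. -/
def DiagSetting.MinimalDiagnosis (S : DiagSetting V α) (Δ : Finset α) : Prop :=
  S.Diagnosis Δ ∧ ∀ Δ' ⊂ Δ, ¬ S.Diagnosis Δ'

/-- `C` is a counterfactual cause if `Th({C})` is consistent. -/
def DiagSetting.CounterfactualCause (S : DiagSetting V α) (C : α) : Prop :=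
  C ∈ S.comps ∧ Consistent (S.Th {C})

/-- `Γ ⊆ 𝔠 \ {C}` is a contingency set for `C ∈ 𝔠` if `Th(Γ)` is inconsistent
and `Th(Γ ∪ {C})` is consistent. -/
def DiagSetting.ContingencySet (S : DiagSetting V α) (C : α) (Γ : Finset α) : Prop :=
  C ∈ S.comps ∧ Γ ⊆ S.comps.erase C ∧ ¬ Consistent (S.Th Γ) ∧ Consistent (S.Th (insert C Γ))

/-- `C` is an actual cause if it has a contingency set. -/
def DiagSetting.ActualCause (S : DiagSetting V α) (C : α) : Prop :=
  ∃ Γ : Finset α, S.ContingencySet C Γ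

/-- A contingency set for `C` is minimal if no proper subset is a contingency set for `C`. -/
def DiagSetting.MinimalContingencySet (S : DiagSetting V α) (C : α) (Γ : Finset α) : Prop :=
  S.ContingencySet C Γ ∧ ∀ Γ' ⊂ Γ, ¬ S.ContingencySet C Γ'

/-- The truth value of `φ` does not depend on any abnormality variable `ab C'`, `C' ∈ 𝔠`. -/
def DiagSetting.IndepAb (S : DiagSetting V α) (φ : PropFormula V) : Prop :=
  ∀ v v' : V → Bool, (∀ x : V, (∀ C ∈ S.comps, S.ab C ≠ x) → v x = v' x) → (φ v ↔ φ v')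

/-- A weak model of failure: every formula of `M` is semantically of the form
`(ab C is true) ∨ ψ` with `ψ` independent of the abnormality variables, and every
formula of `Obs` is independent of the abnormality variables. -/
def DiagSetting.WeakModel (S : DiagSetting V α) : Prop :=
  (∀ φ ∈ S.M, ∃ C ∈ S.comps, ∃ ψ : PropFormula V,
      S.IndepAb ψ ∧ ∀ v, φ v ↔ (v (S.ab C) = true ∨ ψ v)) ∧
  (∀ φ ∈ S.Obs, S.IndepAb φ)

open Classical in
/-- Responsibility: `1/(1+|Γ|)` for a minimum-cardinality contingency set `Γ` for `C`
if `C` is an actual cause, and `0` otherwise. -/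
noncomputable def DiagSetting.Resp (S : DiagSetting V α) (C : α) : ℚ :=
  if S.ActualCause C then
    1 / (1 + ((sInf {n : ℕ | ∃ Γ : Finset α, S.ContingencySet C Γ ∧ Γ.card = n} : ℕ) : ℚ))
  else 0

/-- If `Δ` is a minimal diagnosis and `C ∈ Δ`, then `Δ \ {C}` is a minimal
contingency set for `C`; in particular, `C` is an actual cause. -/
theorem minimalDiagnosis_erase_minimalContingencySet
    (S : DiagSetting V α) (Δ : Finset α) (C : α)
    (hΔ : S.MinimalDiagnosis Δ) (hC : C ∈ Δ) :
    S.MinimalContingencySet C (Δ.erase C) ∧ S.ActualCause C := by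
  obtain ⟨⟨hsub, hcons⟩, hmin⟩ := hΔ
  have hCc : C ∈ S.comps := hsub hC
  have hins : insert C (Δ.erase C) = Δ := Finset.insert_erase hC
  have hcs : S.ContingencySet C (Δ.erase C) := by
    refine ⟨hCc, ?_, ?_, ?_⟩
    · intro x hx
      rw [Finset.mem_erase] at hx ⊢
      exact ⟨hx.1, hsub hx.2⟩
    · intro hconsE
      exact hmin (Δ.erase C) (Finset.erase_ssubset hC)
        ⟨(Finset.erase_subset _ _).trans hsub, hconsE⟩
    · rw [hins]; exact hcons
  have hminc : ∀ Γ' ⊂ Δ.erase C, ¬ S.ContingencySet C Γ' := by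
    intro Γ' hss ⟨_, hΓ'sub, _, hconsI⟩
    have hsub' : insert C Γ' ⊆ Δ := by
      rw [← hins]; exact Finset.insert_subset_insert _ hss.subset
    have hproper : insert C Γ' ⊂ Δ := by
      refine ⟨hsub', fun hle => ?_⟩
      obtain ⟨x, hxE, hxΓ'⟩ := Finset.exists_of_ssubset hss
      have hxΔ : x ∈ Δ := Finset.mem_of_mem_erase hxE
      have := hle hxΔ
      rw [Finset.mem_insert] at this
      rcases this with h | h
      · exact (Finset.mem_erase.mp hxE).1 h
      · exact hxΓ' h
    exact hmin _ hproper ⟨hsub'.trans hsub, hconsI⟩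
  exact ⟨⟨hcs, hminc⟩, ⟨_, hcs⟩⟩
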